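/- arXiv:0906.5242 — 2 statements merged into one kernel-verified Lean document; each statement's English description precedes it below -/
import Mathlib

section
/- There exist smooth functions f, g : (-1-ε, 1+ε) → ℝ (for any ε > 0) such that: f is even with f(t) = e^{t+1} for t in a neighbourhood of (-1-ε, -1]; g is odd with g(t) = 1 for t in a neighbourhood of (-1-ε, -1]; and f'(t)g(t) - f(t)g'(t) > 0 for all t in (-1-ε, 1+ε). -/
open Set Real

noncomputable section Stmt0Aux

/-- A smooth bump: positive on `(0,1)`, zero outside. -/
def sbump (x : ℝ) : ℝ := expNegInvGlue x * expNegInvGlue (1 - x)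

lemma sbump_nonneg (x : ℝ) : 0 ≤ sbump x :=
  mul_nonneg (expNegInvGlue.nonneg x) (expNegInvGlue.nonneg _)

lemma sbump_zero_left {x : ℝ} (h : x ≤ 0) : sbump x = 0 := by
  simp [sbump, expNegInvGlue.zero_of_nonpos h]

lemma sbump_zero_right {x : ℝ} (h : 1 ≤ x) : sbump x = 0 := by
  simp [sbump, expNegInvGlue.zero_of_nonpos (by linarith : 1 - x ≤ 0)]

lemma sbump_contDiff : ContDiff ℝ (⊤ : ℕ∞) sbump :=
  expNegInvGlue.contDiff.mul
    (expNegInvGlue.contDiff.comp (contDiff_const.sub contDiff_id))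

lemma sbump_continuous : Continuous sbump := sbump_contDiff.continuous

/-- normalization constant -/
def Kc : ℝ := ∫ x in (0:ℝ)..1, sbump x

lemma Kc_pos : 0 < Kc :=
  intervalIntegral.intervalIntegral_pos_of_pos_on
    (sbump_continuous.intervalIntegrable 0 1)
    (fun x hx => mul_pos (expNegInvGlue.pos_of_pos hx.1)
      (expNegInvGlue.pos_of_pos (by linarith [hx.2]))) one_pos

/-- Smooth transition with known nonnegative derivative `sbump x / Kc`. -/
def Phi (x : ℝ) : ℝ := (∫ s in (0:ℝ)..x, sbump s) / Kc

lemma Phi_hasDerivAt (x : ℝ) : HasDerivAt Phi (sbump x / Kc) x :=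
  ((sbump_continuous.integral_hasStrictDerivAt 0 x).hasDerivAt).div_const Kc

lemma Phi_zero {x : ℝ} (h : x ≤ 0) : Phi x = 0 := by
  have : (∫ s in (0:ℝ)..x, sbump s) = ∫ s in (0:ℝ)..x, (0:ℝ) := by
    apply intervalIntegral.integral_congr
    intro y hy
    rw [uIcc_of_ge h] at hy
    exact sbump_zero_left hy.2
  simp [Phi, this]

lemma Phi_one {x : ℝ} (h : 1 ≤ x) : Phi x = 1 := by
  have h2 : (∫ s in (1:ℝ)..x, sbump s) = ∫ s in (1:ℝ)..x, (0:ℝ) := by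
    apply intervalIntegral.integral_congr
    intro y hy
    rw [uIcc_of_le h] at hy
    exact sbump_zero_right hy.1
  have h3 : (∫ s in (0:ℝ)..1, sbump s) + ∫ s in (1:ℝ)..x, sbump s
      = ∫ s in (0:ℝ)..x, sbump s :=
    intervalIntegral.integral_add_adjacent_intervals
      (sbump_continuous.intervalIntegrable _ _) (sbump_continuous.intervalIntegrable _ _)
  have : (∫ s in (0:ℝ)..x, sbump s) = Kc := by
    rw [← h3, h2]; simp [Kc]
  rw [Phi, this, div_self Kc_pos.ne']

lemma Phi_nonneg (x : ℝ) : 0 ≤ Phi x := by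
  rcases le_total x 0 with h | h
  · rw [Phi_zero h]
  · exact div_nonneg (intervalIntegral.integral_nonneg h fun u _ => sbump_nonneg u) Kc_pos.le

lemma Phi_le_one (x : ℝ) : Phi x ≤ 1 := by
  rcases le_total 1 x with h | h
  · rw [Phi_one h]
  · rw [Phi, div_le_one Kc_pos]
    have h3 : (∫ s in (0:ℝ)..x, sbump s) + ∫ s in x..1, sbump s
        = ∫ s in (0:ℝ)..1, sbump s :=
      intervalIntegral.integral_add_adjacent_intervals
        (sbump_continuous.intervalIntegrable _ _) (sbump_continuous.intervalIntegrable _ _)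
    have h4 : 0 ≤ ∫ s in x..1, sbump s :=
      intervalIntegral.integral_nonneg h fun u _ => sbump_nonneg u
    rw [Kc, ← h3]; linarith

lemma Phi_contDiff : ContDiff ℝ (⊤ : ℕ∞) Phi := by
  have hd : Differentiable ℝ Phi := fun x => (Phi_hasDerivAt x).differentiableAt
  have hder : deriv Phi = fun x => sbump x / Kc := funext fun x => (Phi_hasDerivAt x).deriv
  exact contDiff_infty_iff_deriv.mpr ⟨hd, by rw [hder]; exact sbump_contDiff.div_const _⟩

/-! ### the odd slope function `mm` and its primitive `qq` -/

def mm (t : ℝ) : ℝ := Phi (8 * t) - Phi (8 * (-t))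

lemma mm_contDiff : ContDiff ℝ (⊤ : ℕ∞) mm := by
  have h1 : ContDiff ℝ (⊤ : ℕ∞) fun t : ℝ => Phi (8 * t) :=
    Phi_contDiff.comp (contDiff_const.mul contDiff_id)
  have h2 : ContDiff ℝ (⊤ : ℕ∞) fun t : ℝ => Phi (8 * (-t)) :=
    Phi_contDiff.comp (contDiff_const.mul contDiff_id.neg)
  exact h1.sub h2

lemma mm_continuous : Continuous mm := mm_contDiff.continuous

lemma mm_odd (t : ℝ) : mm (-t) = - mm t := by
  simp only [mm, neg_neg]; ring

lemma mm_neg_one {t : ℝ} (h : t ≤ -(1/8)) : mm t = -1 := by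
  rw [mm, Phi_zero (by linarith), Phi_one (by linarith)]; ring

lemma mm_one {t : ℝ} (h : 1/8 ≤ t) : mm t = 1 := by
  rw [mm, Phi_one (x := 8 * t) (by linarith), Phi_zero (x := 8 * (-t)) (by linarith)]; ring

lemma mm_le_one (t : ℝ) : mm t ≤ 1 := by
  have := Phi_le_one (8 * t); have := Phi_nonneg (8 * (-t)); rw [mm]; linarith

lemma neg_one_le_mm (t : ℝ) : -1 ≤ mm t := by
  have := Phi_nonneg (8 * t); have := Phi_le_one (8 * (-t)); rw [mm]; linarith

def qq (t : ℝ) : ℝ := ∫ s in (0:ℝ)..t, mm s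

lemma qq_hasDerivAt (t : ℝ) : HasDerivAt qq (mm t) t :=
  (mm_continuous.integral_hasStrictDerivAt 0 t).hasDerivAt

lemma qq_even (t : ℝ) : qq (-t) = qq t := by
  have h := intervalIntegral.integral_comp_neg (a := (0:ℝ)) (b := t) (f := mm)
  have h2 : (∫ x in (0:ℝ)..t, mm (-x)) = - qq t := by
    simp only [mm_odd]; rw [intervalIntegral.integral_neg]; rfl
  have h3 : (∫ x in (-t)..(-(0:ℝ)), mm x) = - qq (-t) := by
    rw [neg_zero, intervalIntegral.integral_symm]; rfl
  rw [h2, h3] at h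
  linarith

lemma qq_eq {t : ℝ} (h : t ≤ -(1/8)) : qq t = qq (-(1/8)) - t - 1/8 := by
  have h3 : qq (-(1/8)) + (∫ s in (-(1/8):ℝ)..t, mm s) = qq t :=
    intervalIntegral.integral_add_adjacent_intervals
      (mm_continuous.intervalIntegrable _ _) (mm_continuous.intervalIntegrable _ _)
  have h2 : (∫ s in (-(1/8):ℝ)..t, mm s) = ∫ s in (-(1/8):ℝ)..t, (-1 : ℝ) := by
    apply intervalIntegral.integral_congr
    intro y hy
    rw [uIcc_of_ge h] at hy
    exact mm_neg_one hy.2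
  rw [h2] at h3
  rw [intervalIntegral.integral_const] at h3
  simp only [smul_eq_mul] at h3
  linarith

lemma qq_contDiff : ContDiff ℝ (⊤ : ℕ∞) qq := by
  have hd : Differentiable ℝ qq := fun x => (qq_hasDerivAt x).differentiableAt
  have hder : deriv qq = mm := funext fun x => (qq_hasDerivAt x).deriv
  exact contDiff_infty_iff_deriv.mpr ⟨hd, by rw [hder]; exact mm_contDiff⟩

/-! ### the even function `ff` -/

def ff (t : ℝ) : ℝ := Real.exp (7/8 + qq (-(1/8)) - qq t)

lemma ff_pos (t : ℝ) : 0 < ff t := Real.exp_pos _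

lemma ff_even (t : ℝ) : ff (-t) = ff t := by rw [ff, ff, qq_even t]

lemma ff_eq {t : ℝ} (h : t ≤ -(1/8)) : ff t = Real.exp (t + 1) := by
  rw [ff, qq_eq h]; ring_nf

lemma ff_contDiff : ContDiff ℝ (⊤ : ℕ∞) ff :=
  Real.contDiff_exp.comp (contDiff_const.sub qq_contDiff)

lemma ff_hasDerivAt (t : ℝ) : HasDerivAt ff (-(mm t) * ff t) t := by
  have h1 : HasDerivAt (fun s => 7/8 + qq (-(1/8)) - qq s) (-(mm t)) t :=
    (qq_hasDerivAt t).const_sub _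
  have := h1.exp
  refine this.congr_deriv ?_
  rw [ff]; ring

/-! ### the odd function `gg` -/

def Aψ (t : ℝ) : ℝ := Phi (8 * t + 6)

def Dψ (t : ℝ) : ℝ := sbump (8 * t + 6) / Kc * 8

lemma Aψ_hasDerivAt (t : ℝ) : HasDerivAt Aψ (Dψ t) t := by
  have hin : HasDerivAt (fun s : ℝ => 8 * s + 6) 8 t := by
    simpa using ((hasDerivAt_id t).const_mul (8:ℝ)).add_const 6
  exact (Phi_hasDerivAt (8 * t + 6)).comp t hin

lemma Aψ_neg_hasDerivAt (t : ℝ) : HasDerivAt (fun s => Aψ (-s)) (-(Dψ (-t))) t := by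
  have := (Aψ_hasDerivAt (-t)).comp t (hasDerivAt_neg t)
  simpa [mul_comm, Function.comp_def] using this

lemma Aψ_contDiff : ContDiff ℝ (⊤ : ℕ∞) Aψ :=
  Phi_contDiff.comp ((contDiff_const.mul contDiff_id).add contDiff_const)

lemma Aψ_nonneg (t : ℝ) : 0 ≤ Aψ t := Phi_nonneg _
lemma Aψ_le_one (t : ℝ) : Aψ t ≤ 1 := Phi_le_one _
lemma Dψ_nonneg (t : ℝ) : 0 ≤ Dψ t :=
  mul_nonneg (div_nonneg (sbump_nonneg _) Kc_pos.le) (by norm_num)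

lemma Aψ_zero {t : ℝ} (h : t ≤ -(3/4)) : Aψ t = 0 := Phi_zero (by rw [show (0:ℝ) = 8 * (-(3/4)) + 6 by norm_num]; linarith)
lemma Aψ_one {t : ℝ} (h : -(5/8) ≤ t) : Aψ t = 1 := Phi_one (by linarith)
lemma Dψ_zero_left {t : ℝ} (h : t ≤ -(3/4)) : Dψ t = 0 := by
  rw [Dψ, sbump_zero_left (by linarith)]; ring
lemma Dψ_zero_right {t : ℝ} (h : -(5/8) ≤ t) : Dψ t = 0 := by
  rw [Dψ, sbump_zero_right (by linarith)]; ring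

def gg (t : ℝ) : ℝ := Aψ (-t) - Aψ t - t * (Aψ t * Aψ (-t))

def gd (t : ℝ) : ℝ :=
  -(Dψ (-t)) - Dψ t - (Aψ t * Aψ (-t) + t * (Dψ t * Aψ (-t) + Aψ t * -(Dψ (-t))))

lemma gg_hasDerivAt (t : ℝ) : HasDerivAt gg (gd t) t := by
  have h1 := Aψ_neg_hasDerivAt t
  have h2 := Aψ_hasDerivAt t
  have h3 := (h1.sub h2).sub ((hasDerivAt_id t).mul (h2.mul h1))
  simp only [id_eq] at h3
  refine h3.congr_deriv ?_
  rw [gd]; simp only [Pi.mul_apply]; ring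

lemma gg_contDiff : ContDiff ℝ (⊤ : ℕ∞) gg := by
  have hA : ContDiff ℝ (⊤ : ℕ∞) fun t : ℝ => Aψ (-t) := Aψ_contDiff.comp contDiff_neg
  exact (hA.sub Aψ_contDiff).sub (contDiff_id.mul (Aψ_contDiff.mul hA))

lemma gg_odd (t : ℝ) : gg (-t) = - gg t := by
  simp only [gg, neg_neg]; ring

lemma gg_one {t : ℝ} (h : t ≤ -(3/4)) : gg t = 1 := by
  rw [gg, Aψ_zero h, Aψ_one (by linarith : -(5/8) ≤ -t)]; ring

/-! ### the main positivity estimate -/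

lemma S_pos (t : ℝ) : 0 < -(mm t) * gg t - gd t := by
  rw [gg, gd]
  rcases le_or_gt t (-(3/4)) with h1 | h1
  · rw [Aψ_zero h1, Aψ_one (by linarith : -(5/8) ≤ -t), Dψ_zero_left h1,
      Dψ_zero_right (by linarith : -(5/8) ≤ -t), mm_neg_one (by linarith)]
    norm_num
  rcases le_or_gt t (-(5/8)) with h2 | h2
  · rw [Aψ_one (by linarith : -(5/8) ≤ -t), Dψ_zero_right (by linarith : -(5/8) ≤ -t),
      mm_neg_one (by linarith)]
    have ha0 := Aψ_nonneg t
    have ha1 := Aψ_le_one t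
    have hd0 := Dψ_nonneg t
    nlinarith [mul_nonneg (by linarith : (0:ℝ) ≤ -t) ha0,
      mul_nonneg hd0 (by linarith : (0:ℝ) ≤ 1 + t)]
  rcases le_or_gt t (-(1/8)) with h3 | h3
  · rw [Aψ_one (by linarith : -(5/8) ≤ -t), Dψ_zero_right (by linarith : -(5/8) ≤ -t),
      Aψ_one (by linarith : -(5/8) ≤ t), Dψ_zero_right (by linarith : -(5/8) ≤ t),
      mm_neg_one (by linarith)]
    nlinarith
  rcases le_or_gt t (1/8) with h4 | h4
  · rw [Aψ_one (by linarith : -(5/8) ≤ -t), Dψ_zero_right (by linarith : -(5/8) ≤ -t),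
      Aψ_one (by linarith : -(5/8) ≤ t), Dψ_zero_right (by linarith : -(5/8) ≤ t)]
    have hm1 := mm_le_one t
    have hm2 := neg_one_le_mm t
    nlinarith [mul_nonneg (by linarith : (0:ℝ) ≤ 1 - mm t) (by linarith : (0:ℝ) ≤ 1/8 - t),
      mul_nonneg (by linarith : (0:ℝ) ≤ 1 + mm t) (by linarith : (0:ℝ) ≤ t + 1/8)]
  rcases le_or_gt t (5/8) with h5 | h5
  · rw [Aψ_one (by linarith : -(5/8) ≤ -t), Dψ_zero_right (by linarith : -(5/8) ≤ -t),
      Aψ_one (by linarith : -(5/8) ≤ t), Dψ_zero_right (by linarith : -(5/8) ≤ t),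
      mm_one (by linarith)]
    nlinarith
  rcases le_or_gt t (3/4) with h6 | h6
  · rw [Aψ_one (by linarith : -(5/8) ≤ t), Dψ_zero_right (by linarith : -(5/8) ≤ t),
      mm_one (by linarith)]
    have ha0 := Aψ_nonneg (-t)
    have ha1 := Aψ_le_one (-t)
    have hd0 := Dψ_nonneg (-t)
    nlinarith [mul_nonneg (by linarith : (0:ℝ) ≤ t) ha0,
      mul_nonneg hd0 (by linarith : (0:ℝ) ≤ 1 - t)]
  · rw [Aψ_one (by linarith : -(5/8) ≤ t), Dψ_zero_right (by linarith : -(5/8) ≤ t),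
      Aψ_zero (by linarith : -t ≤ -(3/4)), Dψ_zero_left (by linarith : -t ≤ -(3/4)),
      mm_one (by linarith)]
    norm_num

lemma key (t : ℝ) : deriv ff t * gg t - ff t * deriv gg t > 0 := by
  rw [(ff_hasDerivAt t).deriv, (gg_hasDerivAt t).deriv]
  have h : -(mm t) * ff t * gg t - ff t * gd t = ff t * (-(mm t) * gg t - gd t) := by ring
  rw [h]
  exact mul_pos (ff_pos t) (S_pos t)

end Stmt0Aux

/-- For any ε > 0 there exist smooth functions `f, g : ℝ → ℝ`
(considered on the interval `(-1-ε, 1+ε)`) such that `f` is even, `g` is odd,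
`f(t) = e^{t+1}` and `g(t) = 1` on a neighbourhood of `(-1-ε, -1]` inside the interval,
and `f'g - fg' > 0` on all of `(-1-ε, 1+ε)`. -/
theorem stmt0 (ε : ℝ) (hε : 0 < ε) :
    ∃ f g : ℝ → ℝ,
      ContDiff ℝ (⊤ : ℕ∞) f ∧ ContDiff ℝ (⊤ : ℕ∞) g ∧
      (∀ t ∈ Ioo (-1 - ε) (1 + ε), f (-t) = f t) ∧
      (∀ t ∈ Ioo (-1 - ε) (1 + ε), g (-t) = - g t) ∧
      (∃ δ > 0, ∀ t ∈ Ioo (-1 - ε) (-1 + δ), f t = Real.exp (t + 1) ∧ g t = 1) ∧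
      (∀ t ∈ Ioo (-1 - ε) (1 + ε), deriv f t * g t - f t * deriv g t > 0) := by
  refine ⟨ff, gg, ff_contDiff, gg_contDiff, fun t _ => ff_even t, fun t _ => gg_odd t,
    ⟨1/4, by norm_num, fun t ht => ?_⟩, fun t _ => key t⟩
  have h : t ≤ -(3/4) := by
    have := ht.2; linarith [ht.2]
  exact ⟨ff_eq (by linarith), gg_one h⟩
end

section
/- Let π : M → B be a principal S¹-bundle over a closed oriented 2n-dimensional manifold B, let ω be a symplectic form on B, and let α be a connection 1-form on M (invariant and normalised) with dα = π*ω. Then α is a contact form on M, i.e. α ∧ (dα)^n is nowhere zero. -/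
/-! **Statement 6.** Let `π : M → B` be a principal `S¹`-bundle over a closed oriented
`2n`-manifold `B`, `ω` a symplectic form on `B`, and `α` a connection 1-form
(invariant and normalised) with `dα = π*ω`. Then `α` is a contact form on `M`.

We formalise this in local coordinates: in a local trivialisation with gauge `a`
(a 1-form on the base), the invariant normalised connection form is
`α = dθ + π*a` on `B × S¹`, and the condition `dα = π*ω` reads `da = ω`.
The conclusion `α ∧ (dα)^n ≠ 0` everywhere is expressed by full antisymmetrised
evaluation of forms on tangent vectors. -/

/-- Exterior derivative of a 1-form on a vector space. -/
noncomputable def extDer1 {E : Type*} [NormedAddCommGroup E] [NormedSpace ℝ E]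
    (α : E → E → ℝ) (p u v : E) : ℝ :=
  fderiv ℝ (fun q => α q v) p u - fderiv ℝ (fun q => α q u) p v

/-- Evaluation of `α ∧ ω^n` on `2n+1` tangent vectors. -/
noncomputable def oneWedgePow {E : Type*} [NormedAddCommGroup E] [NormedSpace ℝ E]
    (α : E → E → ℝ) (ω : E → E → E → ℝ) (n : ℕ) (p : E) (v : Fin (2 * n + 1) → E) : ℝ :=
  ∑ σ : Equiv.Perm (Fin (2 * n + 1)), ((Equiv.Perm.sign σ : ℤ) : ℝ) *
    α p (v (σ ⟨0, by omega⟩)) *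
    ∏ i : Fin n, ω p (v (σ ⟨2 * i.1 + 1, by have := i.2; omega⟩))
      (v (σ ⟨2 * i.1 + 2, by have := i.2; omega⟩))

/-- Evaluation of `ω^n` on `2n` tangent vectors. -/
noncomputable def powEval {E : Type*} [NormedAddCommGroup E] [NormedSpace ℝ E]
    (ω : E → E → E → ℝ) (n : ℕ) (p : E) (v : Fin (2 * n) → E) : ℝ :=
  ∑ σ : Equiv.Perm (Fin (2 * n)), ((Equiv.Perm.sign σ : ℤ) : ℝ) *
    ∏ i : Fin n, ω p (v (σ ⟨2 * i.1, by have := i.2; omega⟩))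
      (v (σ ⟨2 * i.1 + 1, by have := i.2; omega⟩))

theorem stmt6 (n : ℕ) (hn : 1 ≤ n)
    -- the local gauge `a` of the connection form and the symplectic form `ω` on `B`:
    (a : (Fin (2 * n) → ℝ) → (Fin (2 * n) → ℝ) → ℝ)
    (ω : (Fin (2 * n) → ℝ) → (Fin (2 * n) → ℝ) → (Fin (2 * n) → ℝ) → ℝ)
    (hsm : ContDiff ℝ (⊤ : ℕ∞) fun q : (Fin (2 * n) → ℝ) × (Fin (2 * n) → ℝ) =>
      a q.1 q.2)
    (hlin : ∀ b, IsLinearMap ℝ (a b))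
    (hskew : ∀ b u v, ω b u v = -ω b v u)
    -- `ω` is closed:
    (hclosed : ∀ b u v w,
      fderiv ℝ (fun q => ω q v w) b u - fderiv ℝ (fun q => ω q u w) b v +
        fderiv ℝ (fun q => ω q u v) b w = 0)
    -- `ω^n` is nowhere zero (nondegeneracy of the symplectic form):
    (hsymp : ∀ b, ∃ w : Fin (2 * n) → (Fin (2 * n) → ℝ), powEval ω n b w ≠ 0)
    -- the curvature condition `dα = π*ω`, i.e. `da = ω` in the local gauge:
    (hcurv : ∀ b u v, extDer1 a b u v = ω b u v) :
    -- the connection 1-form `α = dθ + π*a` is a contact form on `M`: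
    ∀ α : ((Fin (2 * n) → ℝ) × ℝ) → ((Fin (2 * n) → ℝ) × ℝ) → ℝ,
      (∀ p v, α p v = v.2 + a p.1 v.1) →
      ∀ p, ∃ v : Fin (2 * n + 1) → (Fin (2 * n) → ℝ) × ℝ,
        oneWedgePow α (extDer1 α) n p v ≠ 0 := by
  -- `ω` vanishes when an argument is `0`
  have hω0 : ∀ b x, ω b 0 x = 0 := by
    intro b x
    rw [← hcurv]
    have h1 : (fun q => a q (0 : Fin (2 * n) → ℝ)) = fun _ => (0 : ℝ) :=
      funext fun q => (hlin q).map_zero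
    unfold extDer1
    rw [h1]
    simp
  have hω0' : ∀ b x, ω b x 0 = 0 := by
    intro b x; rw [hskew, hω0, neg_zero]
  -- differentiability of the gauge in the base point
  have hda : ∀ (y : Fin (2 * n) → ℝ), Differentiable ℝ (fun b => a b y) := by
    intro y
    exact (hsm.differentiable (by simp)).comp (differentiable_id.prodMk (differentiable_const y))
  intro α hα p
  -- `extDer1 α` is the pullback of `ω`
  have key : ∀ (q : (Fin (2 * n) → ℝ) × ℝ) (x y : (Fin (2 * n) → ℝ) × ℝ),
      extDer1 α q x y = ω q.1 x.1 y.1 := by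
    intro q x y
    have h1 : ∀ (z y : (Fin (2 * n) → ℝ) × ℝ),
        fderiv ℝ (fun r => α r y) q z = fderiv ℝ (fun b => a b y.1) q.1 z.1 := by
      intro z y
      have he : (fun r : (Fin (2 * n) → ℝ) × ℝ => α r y) =
          fun r => y.2 + a r.1 y.1 := funext fun r => hα r y
      rw [he, fderiv_const_add]
      have hcomp : HasFDerivAt (fun r : (Fin (2 * n) → ℝ) × ℝ => a r.1 y.1)
          ((fderiv ℝ (fun b => a b y.1) q.1).comp
            (ContinuousLinearMap.fst ℝ (Fin (2 * n) → ℝ) ℝ)) q :=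
        ((hda y.1) q.1).hasFDerivAt.comp q (hasFDerivAt_fst)
      rw [hcomp.fderiv]
      rfl
    unfold extDer1
    rw [h1, h1, ← hcurv]
    rfl
  obtain ⟨w, hw⟩ := hsymp p.1
  set u : Fin (2 * n + 1) → (Fin (2 * n) → ℝ) := Fin.cons 0 w with hu
  refine ⟨fun j => (u j, if j = 0 then 1 else 0), ?_⟩
  unfold oneWedgePow
  simp only [key, hα]
  have hre := Equiv.sum_comp
    (Equiv.Perm.decomposeFin.symm :
      Fin (2 * n + 1) × Equiv.Perm (Fin (2 * n)) ≃ Equiv.Perm (Fin (2 * n + 1)))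
    (fun σ : Equiv.Perm (Fin (2 * n + 1)) =>
      ((Equiv.Perm.sign σ : ℤ) : ℝ) *
        ((if σ ⟨0, by omega⟩ = 0 then (1:ℝ) else 0) + a p.1 (u (σ ⟨0, by omega⟩))) *
        ∏ i : Fin n, ω p.1 (u (σ ⟨2 * i.1 + 1, by have := i.2; omega⟩))
          (u (σ ⟨2 * i.1 + 2, by have := i.2; omega⟩)))
  rw [← hre, Fintype.sum_prod_type]
  rw [Finset.sum_eq_single (0 : Fin (2 * n + 1))]
  · -- the `σ 0 = 0` part equals `powEval ω n p.1 w`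
    have : ∑ e : Equiv.Perm (Fin (2 * n)),
        (fun σ : Equiv.Perm (Fin (2 * n + 1)) =>
          ((Equiv.Perm.sign σ : ℤ) : ℝ) *
            ((if σ ⟨0, by omega⟩ = 0 then (1:ℝ) else 0) + a p.1 (u (σ ⟨0, by omega⟩))) *
            ∏ i : Fin n, ω p.1 (u (σ ⟨2 * i.1 + 1, by have := i.2; omega⟩))
              (u (σ ⟨2 * i.1 + 2, by have := i.2; omega⟩)))
          (Equiv.Perm.decomposeFin.symm (0, e)) = powEval ω n p.1 w := by
      unfold powEval
      refine Finset.sum_congr rfl ?_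
      intro e _
      have hz : (⟨0, by omega⟩ : Fin (2 * n + 1)) = 0 := rfl
      have h0 : Equiv.Perm.decomposeFin.symm ((0 : Fin (2*n+1)), e) ⟨0, by omega⟩ = 0 := by
        rw [hz]; exact Equiv.Perm.decomposeFin_symm_apply_zero 0 e
      have hsucc : ∀ (k : ℕ) (hk : k < 2 * n) (hk1 : k + 1 < 2 * n + 1),
          Equiv.Perm.decomposeFin.symm ((0 : Fin (2*n+1)), e) ⟨k + 1, hk1⟩ =
            Fin.succ (e ⟨k, hk⟩) := by
        intro k hk hk1
        have : (⟨k + 1, hk1⟩ : Fin (2*n+1)) = Fin.succ ⟨k, hk⟩ := rfl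
        rw [this, Equiv.Perm.decomposeFin_symm_apply_succ, Equiv.swap_self]
        rfl
      have hs : ((Equiv.Perm.sign (Equiv.Perm.decomposeFin.symm ((0 : Fin (2*n+1)), e)) : ℤ) : ℝ)
          = ((Equiv.Perm.sign e : ℤ) : ℝ) := by
        rw [Equiv.Perm.decomposeFin.symm_sign]; simp
      beta_reduce
      rw [hs, h0]
      have hα0 : u (0 : Fin (2*n+1)) = 0 := by simp [hu]
      have ha0 : a p.1 (u (0 : Fin (2*n+1))) = 0 := by rw [hα0]; exact (hlin p.1).map_zero
      rw [ha0]
      simp only [if_pos rfl, add_zero, mul_one]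
      congr 1
      simp
    rw [this]; exact hw
  · -- terms with `σ 0 = p' ≠ 0` vanish
    intro p' _ hp'
    refine Finset.sum_eq_zero ?_
    intro e _
    set σ : Equiv.Perm (Fin (2 * n + 1)) := Equiv.Perm.decomposeFin.symm (p', e) with hσ
    have hσ0 : σ ⟨0, by omega⟩ = p' := Equiv.Perm.decomposeFin_symm_apply_zero p' e
    set j : Fin (2 * n + 1) := σ⁻¹ 0 with hj
    have hσj : σ j = 0 := Equiv.apply_symm_apply σ 0
    have hj0 : j ≠ 0 := by
      intro h
      apply hp'
      rw [← hσ0]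
      calc σ ⟨0, by omega⟩ = σ j := by rw [h]; rfl
        _ = 0 := hσj
    have hjval : 1 ≤ j.1 := by
      rcases Nat.eq_zero_or_pos j.1 with h | h
      · exact absurd (Fin.ext h) hj0
      · exact h
    have hu0 : u (0 : Fin (2*n+1)) = 0 := by simp [hu]
    rcases Nat.even_or_odd j.1 with ⟨k, hk⟩ | ⟨k, hk⟩
    · -- j.1 = 2k = 2(k-1)+2 : zero appears in second slot of a factor
      have hk1 : 1 ≤ k := by omega
      have hkn : k - 1 < n := by have := j.2; omega
      have hfac : ω p.1 (u (σ ⟨2 * (k-1) + 1, by omega⟩)) (u (σ ⟨2 * (k-1) + 2, by omega⟩)) = 0 := by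
        have : (⟨2 * (k-1) + 2, by omega⟩ : Fin (2*n+1)) = j := Fin.ext (show 2*(k-1)+2 = j.1 by omega)
        rw [this, hσj, hu0, hω0']
      have : (∏ i : Fin n, ω p.1 (u (σ ⟨2 * i.1 + 1, by have := i.2; omega⟩))
          (u (σ ⟨2 * i.1 + 2, by have := i.2; omega⟩))) = 0 :=
        Finset.prod_eq_zero (Finset.mem_univ (⟨k - 1, hkn⟩ : Fin n)) hfac
      rw [this, mul_zero]
    · -- j.1 = 2k+1 : zero appears in first slot of a factor
      have hkn : k < n := by have := j.2; omega
      have hfac : ω p.1 (u (σ ⟨2 * k + 1, by omega⟩)) (u (σ ⟨2 * k + 2, by omega⟩)) = 0 := by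
        have : (⟨2 * k + 1, by omega⟩ : Fin (2*n+1)) = j := Fin.ext (show 2*k+1 = j.1 by omega)
        rw [this, hσj, hu0, hω0]
      have : (∏ i : Fin n, ω p.1 (u (σ ⟨2 * i.1 + 1, by have := i.2; omega⟩))
          (u (σ ⟨2 * i.1 + 2, by have := i.2; omega⟩))) = 0 :=
        Finset.prod_eq_zero (Finset.mem_univ (⟨k, hkn⟩ : Fin n)) hfac
      rw [this, mul_zero]
  · intro h; exact absurd (Finset.mem_univ _) h
end
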